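/- Let n be a positive integer and c > 0, and define the peakon u(t,x) := c^{1/n} e^{−|x−ct|}. For each t let f_t(y) := (n/2) u(t,y)^{n−1} (∂_y u(t,y))^2 + (n(n+3)/(2(n+1))) u(t,y)^{n+1}, where ∂_y u(t,y) = −sgn(y−ct) u(t,y) for y ≠ ct (the value of f_t at the single point y = ct is irrelevant for the convolution below). Then for every (t,x) with x ≠ ct, u is differentiable in t and x at (t,x), the function x ↦ (g ∗ f_t)(x) is differentiable at x, and ∂_t u(t,x) + u(t,x)^n ∂_x u(t,x) + ∂_x(g ∗ f_t)(x) = 0; that is, the peakon satisfies the nonlocal form of (CH_n) away from its crest. -/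

import Mathlib

open Real MeasureTheory Filter Topology

/-- The Green function `g(x) = e^{-|x|}/2` of `1 - ∂ₓ²` on `ℝ`. -/
noncomputable def g (x : ℝ) : ℝ := Real.exp (-|x|) / 2

/-- The peakon `u(t,x) = c^{1/n} e^{-|x - ct|}`. -/
noncomputable def peakon (n : ℕ) (c t x : ℝ) : ℝ :=
  c ^ ((1 : ℝ) / (n : ℝ)) * Real.exp (-|x - c * t|)

/-- `f_t` for the peakon, with `∂_y u = -sgn(y - ct) u`. -/
noncomputable def fPeakon (n : ℕ) (c t y : ℝ) : ℝ :=
  ((n : ℝ) / 2) * peakon n c t y ^ (n - 1) * (-Real.sign (y - c * t) * peakon n c t y) ^ 2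
    + ((n : ℝ) * ((n : ℝ) + 3) / (2 * ((n : ℝ) + 1))) * peakon n c t y ^ (n + 1)

open Set

lemma myIntOn_Ioi {k : ℝ} (hk : 0 < k) (a : ℝ) :
    IntegrableOn (fun w : ℝ => Real.exp (-(k * w))) (Set.Ioi a) := by
  simpa [neg_mul] using exp_neg_integrableOn_Ioi a hk

lemma myInt_Ioi {k : ℝ} (hk : 0 < k) (a : ℝ) :
    ∫ w in Set.Ioi a, Real.exp (-(k * w)) = Real.exp (-(k * a)) / k := by
  have h : ∀ w ∈ Set.Ici a,
      HasDerivAt (fun w => -Real.exp (-(k * w)) / k) (Real.exp (-(k * w))) w := by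
    intro w _
    have h1 : HasDerivAt (fun w : ℝ => -(k * w)) (-k) w := by
      simpa using ((hasDerivAt_id w).const_mul k).fun_neg
    have h2 := (h1.exp.neg).div_const k
    exact h2.congr_deriv (by field_simp [hk.ne'])
  have htend : Tendsto (fun w : ℝ => -Real.exp (-(k * w)) / k) atTop (𝓝 0) := by
    have h1 : Tendsto (fun w : ℝ => k * w) atTop atTop :=
      Tendsto.const_mul_atTop hk tendsto_id
    have h2 : Tendsto (fun w : ℝ => Real.exp (-(k * w))) atTop (𝓝 0) :=
      tendsto_exp_neg_atTop_nhds_zero.comp h1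
    simpa using h2.neg.div_const k
  have := integral_Ioi_of_hasDerivAt_of_tendsto' h (myIntOn_Ioi hk a) htend
  rw [this]; ring

lemma myIntOn_Iic {k : ℝ} (hk : 0 < k) (a : ℝ) :
    IntegrableOn (fun w : ℝ => Real.exp (k * w)) (Set.Iic a) := by
  rw [← (Measure.measurePreserving_neg (volume : Measure ℝ)).integrableOn_comp_preimage
      (Homeomorph.neg ℝ).measurableEmbedding]
  simp only [Function.comp_def, neg_preimage, neg_Iic]
  rw [integrableOn_Ici_iff_integrableOn_Ioi]
  simpa [mul_neg] using myIntOn_Ioi hk (-a)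

lemma myInt_Iic {k : ℝ} (hk : 0 < k) (a : ℝ) :
    ∫ w in Set.Iic a, Real.exp (k * w) = Real.exp (k * a) / k := by
  have h := integral_comp_neg_Iic a (fun x => Real.exp (-(k * x)))
  simp only [mul_neg, neg_neg] at h
  rw [h, myInt_Ioi hk]
  simp [mul_neg]

lemma myInt_interval (k : ℝ) (hk : k ≠ 0) (a b : ℝ) :
    ∫ w in a..b, Real.exp (k * w) = (Real.exp (k * b) - Real.exp (k * a)) / k := by
  have h : ∀ w ∈ Set.uIcc a b,
      HasDerivAt (fun w => Real.exp (k * w) / k) (Real.exp (k * w)) w := by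
    intro w _
    have h1 : HasDerivAt (fun w : ℝ => k * w) k w := by
      simpa using (hasDerivAt_id w).const_mul k
    have h2 := h1.exp.div_const k
    exact h2.congr_deriv (by field_simp)
  rw [intervalIntegral.integral_eq_sub_of_hasDerivAt h
    ((continuous_exp.comp (continuous_const.mul continuous_id)).intervalIntegrable a b)]
  ring

lemma myIntegrable_exp_abs {m : ℝ} (hm : 0 < m) :
    Integrable (fun w : ℝ => Real.exp (-(m * |w|))) := by
  have h1 : IntegrableOn (fun w : ℝ => Real.exp (-(m * |w|))) (Set.Iic 0) := by
    refine (myIntOn_Iic hm 0).congr_fun (fun w hw => ?_) measurableSet_Iic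
    rw [abs_of_nonpos (hw : w ≤ (0:ℝ))]
    ring_nf
  have h2 : IntegrableOn (fun w : ℝ => Real.exp (-(m * |w|))) (Set.Ioi 0) := by
    refine (myIntOn_Ioi hm 0).congr_fun (fun w hw => ?_) measurableSet_Ioi
    rw [abs_of_pos (hw : (0:ℝ) < w)]
  rw [← integrableOn_univ, ← Set.Iic_union_Ioi (a := (0:ℝ)), integrableOn_union]
  exact ⟨h1, h2⟩

lemma myIntegrable_core {m : ℝ} (hm : 0 < m) (s : ℝ) :
    Integrable (fun w : ℝ => Real.exp (-|s - w|) * Real.exp (-(m * |w|))) := by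
  refine (myIntegrable_exp_abs hm).mono' ?_ ?_
  · exact (((continuous_const.sub continuous_id).abs.neg.rexp).mul
      (((continuous_const.mul continuous_abs).neg).rexp)).aestronglyMeasurable
  · filter_upwards with w
    rw [Real.norm_eq_abs, abs_of_nonneg (by positivity)]
    calc Real.exp (-|s - w|) * Real.exp (-(m * |w|))
        ≤ 1 * Real.exp (-(m * |w|)) := by
          gcongr
          exact Real.exp_le_one_iff.mpr (by simp [abs_nonneg])
      _ = Real.exp (-(m * |w|)) := one_mul _

lemma myCore_nonneg {m : ℝ} (hm : 1 < m) {s : ℝ} (hs : 0 ≤ s) :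
    ∫ w : ℝ, Real.exp (-|s - w|) * Real.exp (-(m * |w|))
      = (2 * m * Real.exp (-s) - 2 * Real.exp (-(m * s))) / (m ^ 2 - 1) := by
  have hm0 : 0 < m := by linarith
  have hint := myIntegrable_core hm0 s
  have hsplit1 : ∫ w : ℝ, Real.exp (-|s - w|) * Real.exp (-(m * |w|))
      = (∫ w in Set.Iic 0, Real.exp (-|s - w|) * Real.exp (-(m * |w|)))
        + ∫ w in Set.Ioi 0, Real.exp (-|s - w|) * Real.exp (-(m * |w|)) :=
    (intervalIntegral.integral_Iic_add_Ioi hint.integrableOn hint.integrableOn).symm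
  have hsplit2 : ∫ w in Set.Ioi (0:ℝ), Real.exp (-|s - w|) * Real.exp (-(m * |w|))
      = (∫ w in Set.Ioc 0 s, Real.exp (-|s - w|) * Real.exp (-(m * |w|)))
        + ∫ w in Set.Ioi s, Real.exp (-|s - w|) * Real.exp (-(m * |w|)) := by
    rw [← Set.Ioc_union_Ioi_eq_Ioi hs]
    exact setIntegral_union (Set.Ioc_disjoint_Ioi le_rfl) measurableSet_Ioi
      hint.integrableOn hint.integrableOn
  have p1 : ∫ w in Set.Iic (0:ℝ), Real.exp (-|s - w|) * Real.exp (-(m * |w|))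
      = Real.exp (-s) / (m + 1) := by
    rw [setIntegral_congr_fun measurableSet_Iic
      (show Set.EqOn (fun w : ℝ => Real.exp (-|s - w|) * Real.exp (-(m * |w|)))
        (fun w : ℝ => Real.exp (-s) * Real.exp ((m + 1) * w)) (Set.Iic 0) from by
          intro w hw
          have hw' : w ≤ 0 := hw
          show Real.exp (-|s - w|) * Real.exp (-(m * |w|)) = Real.exp (-s) * Real.exp ((m + 1) * w)
          rw [abs_of_nonpos hw', abs_of_nonneg (by linarith : (0:ℝ) ≤ s - w),
            ← Real.exp_add, ← Real.exp_add]
          ring_nf)]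
    rw [MeasureTheory.integral_const_mul, myInt_Iic (by linarith : (0:ℝ) < m + 1),
      mul_zero, Real.exp_zero]
    ring
  have p2 : ∫ w in Set.Ioc (0:ℝ) s, Real.exp (-|s - w|) * Real.exp (-(m * |w|))
      = (Real.exp (-(m * s)) - Real.exp (-s)) / (1 - m) := by
    rw [setIntegral_congr_fun measurableSet_Ioc
      (show Set.EqOn (fun w : ℝ => Real.exp (-|s - w|) * Real.exp (-(m * |w|)))
        (fun w : ℝ => Real.exp (-s) * Real.exp ((1 - m) * w)) (Set.Ioc 0 s) from by
          intro w hw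
          show Real.exp (-|s - w|) * Real.exp (-(m * |w|)) = Real.exp (-s) * Real.exp ((1 - m) * w)
          rw [abs_of_pos (hw.1 : (0:ℝ) < w),
            abs_of_nonneg (by linarith [hw.2] : (0:ℝ) ≤ s - w), ← Real.exp_add, ← Real.exp_add]
          ring_nf)]
    rw [MeasureTheory.integral_const_mul, ← intervalIntegral.integral_of_le hs,
      myInt_interval (1 - m) (by linarith) 0 s]
    have h1 : Real.exp (-s) * Real.exp ((1 - m) * s) = Real.exp (-(m * s)) := by
      rw [← Real.exp_add]; ring_nf
    have hne2 : (1:ℝ) - m ≠ 0 := by linarith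
    rw [mul_zero, Real.exp_zero, ← h1]
    field_simp
  have p3 : ∫ w in Set.Ioi s, Real.exp (-|s - w|) * Real.exp (-(m * |w|))
      = Real.exp (-(m * s)) / (m + 1) := by
    rw [setIntegral_congr_fun measurableSet_Ioi
      (show Set.EqOn (fun w : ℝ => Real.exp (-|s - w|) * Real.exp (-(m * |w|)))
        (fun w : ℝ => Real.exp s * Real.exp (-((m + 1) * w))) (Set.Ioi s) from by
          intro w hw
          show Real.exp (-|s - w|) * Real.exp (-(m * |w|)) = Real.exp s * Real.exp (-((m + 1) * w))
          rw [abs_of_pos (by linarith [hw.out, hs] : (0:ℝ) < w),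
            abs_of_nonpos (by linarith [hw.out] : s - w ≤ (0:ℝ)), ← Real.exp_add, ← Real.exp_add]
          ring_nf)]
    rw [MeasureTheory.integral_const_mul, myInt_Ioi (by linarith : (0:ℝ) < m + 1)]
    have h2 : Real.exp s * Real.exp (-((m + 1) * s)) = Real.exp (-(m * s)) := by
      rw [← Real.exp_add]; ring_nf
    rw [← h2]
    ring
  rw [hsplit1, hsplit2, p1, p2, p3]
  have hne1 : m + 1 ≠ 0 := by linarith
  have hne2 : (1:ℝ) - m ≠ 0 := by linarith
  have hne3 : m ^ 2 - 1 ≠ 0 := by nlinarith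
  field_simp
  ring

lemma myCore {m : ℝ} (hm : 1 < m) (s : ℝ) :
    ∫ w : ℝ, Real.exp (-|s - w|) * Real.exp (-(m * |w|))
      = (2 * m * Real.exp (-|s|) - 2 * Real.exp (-(m * |s|))) / (m ^ 2 - 1) := by
  rcases le_or_gt 0 s with hs | hs
  · rw [abs_of_nonneg hs]; exact myCore_nonneg hm hs
  · rw [abs_of_neg hs]
    have h := myCore_nonneg hm (by linarith : (0:ℝ) ≤ -s)
    rw [← h]
    have h2 := integral_neg_eq_self
      (fun w => Real.exp (-|(-s) - w|) * Real.exp (-(m * |w|))) (volume : Measure ℝ)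
    rw [← h2]
    congr 1; funext w
    rw [abs_neg, show -s - -w = -(s - w) by ring, abs_neg]

lemma myKey (n : ℕ) (hn : 0 < n) (c : ℝ) (hc : 0 < c) (t z : ℝ) :
    ∫ y : ℝ, g (z - y) * fPeakon n c t y
      = (c ^ ((1:ℝ)/(n:ℝ))) ^ (n+1) * Real.exp (-|z - c*t|)
        - (c ^ ((1:ℝ)/(n:ℝ))) ^ (n+1) / ((n:ℝ)+1)
            * Real.exp (-(((n:ℝ)+1) * |z - c*t|)) := by
  set A : ℝ := c ^ ((1:ℝ)/(n:ℝ)) with hA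
  have hn1 : (1:ℝ) ≤ (n:ℝ) := by exact_mod_cast hn
  have hm : (1:ℝ) < (n:ℝ) + 1 := by linarith
  -- pointwise identity away from the crest
  have hpt : ∀ y : ℝ, y ≠ c * t →
      g (z - y) * fPeakon n c t y
        = ((n:ℝ) * ((n:ℝ)+2) / ((n:ℝ)+1) * A ^ (n+1) / 2)
            * (Real.exp (-|z - y|) * Real.exp (-(((n:ℝ)+1) * |y - c*t|))) := by
    intro y hy
    have hs2 : (Real.sign (y - c*t)) ^ 2 = 1 := by
      rcases (sub_ne_zero_of_ne hy).lt_or_gt with h | h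
      · rw [Real.sign_of_neg h]; norm_num
      · rw [Real.sign_of_pos h]; norm_num
    have hexp : Real.exp (-|y - c*t|) ^ (n+1) = Real.exp (-(((n:ℝ)+1) * |y - c*t|)) := by
      rw [← Real.exp_nat_mul]
      push_cast
      ring_nf
    have hpow : (A * Real.exp (-|y - c*t|)) ^ (n-1) * (A * Real.exp (-|y - c*t|)) ^ 2
        = A ^ (n+1) * Real.exp (-(((n:ℝ)+1) * |y - c*t|)) := by
      rw [← pow_add, show n - 1 + 2 = n + 1 by omega, mul_pow, hexp]
    unfold g fPeakon peakon
    rw [mul_pow (-Real.sign (y - c*t)), neg_sq, hs2, one_mul, mul_assoc ((n:ℝ)/2), hpow,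
      mul_pow, hexp]
    have hne : ((n:ℝ)+1) ≠ 0 := by linarith
    rw [← hA]
    field_simp
    ring
  -- a.e. rewriting of the integrand
  have h0 : ∀ᵐ y : ℝ, y ≠ c * t := by
    rw [ae_iff]
    have : {y : ℝ | ¬ y ≠ c*t} = {c*t} := by ext y; simp
    rw [this]
    exact measure_singleton _
  rw [integral_congr_ae (h0.mono fun y hy => hpt y hy)]
  rw [MeasureTheory.integral_const_mul]
  -- translate
  have htrans : ∫ y : ℝ, Real.exp (-|z - y|) * Real.exp (-(((n:ℝ)+1) * |y - c*t|))
      = ∫ w : ℝ, Real.exp (-|(z - c*t) - w|) * Real.exp (-(((n:ℝ)+1) * |w|)) := by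
    rw [← integral_add_right_eq_self
      (fun y => Real.exp (-|z - y|) * Real.exp (-(((n:ℝ)+1) * |y - c*t|))) (c*t)]
    congr 1; funext w
    rw [show z - (w + c*t) = (z - c*t) - w by ring, show w + c*t - c*t = w by ring]
  rw [htrans, myCore hm (z - c*t)]
  have hne0 : ((n:ℝ)) ≠ 0 := by linarith
  have hne1 : ((n:ℝ)+1) ≠ 0 := by linarith
  have hne2 : ((n:ℝ)+2) ≠ 0 := by linarith
  have hne3 : ((n:ℝ)+1)^2 - 1 ≠ 0 := by nlinarith
  field_simp
  ring

/-- Away from its crest `x = ct`, the peakon satisfies the nonlocal form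
of (CH_n): `u_t + uⁿ u_x + ∂ₓ(g ∗ f_t) = 0`. -/
theorem peakon_solves_nonlocal_form
    (n : ℕ) (hn : 0 < n) (c : ℝ) (hc : 0 < c) :
    ∀ t x : ℝ, x ≠ c * t →
      DifferentiableAt ℝ (fun s => peakon n c s x) t ∧
      DifferentiableAt ℝ (fun y => peakon n c t y) x ∧
      DifferentiableAt ℝ (fun z => ∫ y : ℝ, g (z - y) * fPeakon n c t y) x ∧
      deriv (fun s => peakon n c s x) t
        + peakon n c t x ^ n * deriv (fun y => peakon n c t y) x
        + deriv (fun z => ∫ y : ℝ, g (z - y) * fPeakon n c t y) x = 0 := by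
  intro t x hx
  set A : ℝ := c ^ ((1:ℝ)/(n:ℝ)) with hA
  have hA0 : (0:ℝ) < A := Real.rpow_pos_of_pos hc _
  have hn1 : (1:ℝ) ≤ (n:ℝ) := by exact_mod_cast hn
  have hne1 : ((n:ℝ)+1) ≠ 0 := by linarith
  have hAn : A ^ n = c := by
    rw [hA, ← Real.rpow_natCast (c ^ ((1:ℝ)/(n:ℝ))) n, ← Real.rpow_mul hc.le]
    rw [one_div, inv_mul_cancel₀ (by positivity : ((n:ℝ)) ≠ 0), Real.rpow_one]
  have hA1 : A ^ (n+1) = c * A := by rw [pow_succ, hAn]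
  have hkey : (fun z => ∫ y : ℝ, g (z - y) * fPeakon n c t y)
      = (fun z => A ^ (n+1) * Real.exp (-|z - c*t|)
          - A ^ (n+1) / ((n:ℝ)+1) * Real.exp (-(((n:ℝ)+1) * |z - c*t|))) := by
    funext z; exact myKey n hn c hc t z
  rcases (sub_ne_zero_of_ne hx).lt_or_gt with h | h
  · -- x < c*t
    -- time derivative
    have hev1 : (fun s => peakon n c s x) =ᶠ[𝓝 t] (fun s => A * Real.exp (x - c*s)) := by
      have hopen : IsOpen {s : ℝ | x < c * s} :=
        isOpen_lt continuous_const (continuous_const.mul continuous_id)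
      filter_upwards [hopen.mem_nhds (by simpa using by linarith : t ∈ {s : ℝ | x < c * s})]
        with s hs
      unfold peakon
      rw [← hA, abs_of_neg (by simpa using hs : x - c*s < 0)]
      ring_nf
    have hd1 : HasDerivAt (fun s : ℝ => A * Real.exp (x - c*s)) 
        (A * (Real.exp (x - c*t) * (-c))) t := by
      have h1 : HasDerivAt (fun s : ℝ => x - c*s) (-c) t := by
        simpa using ((hasDerivAt_id t).const_mul c).const_sub x
      exact h1.exp.const_mul A
    have ht1 : HasDerivAt (fun s => peakon n c s x) (A * (Real.exp (x - c*t) * (-c))) t :=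
      hd1.congr_of_eventuallyEq hev1
    -- space derivative
    have hev2 : (fun y => peakon n c t y) =ᶠ[𝓝 x] (fun y => A * Real.exp (y - c*t)) := by
      filter_upwards [eventually_lt_nhds (by linarith : x < c*t)] with y hy
      unfold peakon
      rw [← hA, abs_of_neg (by linarith : y - c*t < 0)]
      ring_nf
    have hd2 : HasDerivAt (fun y : ℝ => A * Real.exp (y - c*t))
        (A * Real.exp (x - c*t)) x := by
      have h1 : HasDerivAt (fun y : ℝ => y - c*t) 1 x := (hasDerivAt_id x).sub_const _
      simpa using h1.exp.const_mul A
    have ht2 : HasDerivAt (fun y => peakon n c t y) (A * Real.exp (x - c*t)) x :=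
      hd2.congr_of_eventuallyEq hev2
    -- convolution derivative
    have hev3 : (fun z => ∫ y : ℝ, g (z - y) * fPeakon n c t y) =ᶠ[𝓝 x]
        (fun z => A ^ (n+1) * Real.exp (z - c*t)
          - A ^ (n+1) / ((n:ℝ)+1) * Real.exp (((n:ℝ)+1) * (z - c*t))) := by
      rw [hkey]
      filter_upwards [eventually_lt_nhds (by linarith : x < c*t)] with z hz
      rw [abs_of_neg (by linarith : z - c*t < 0)]
      ring_nf
    have hd3 : HasDerivAt (fun z : ℝ => A ^ (n+1) * Real.exp (z - c*t)
          - A ^ (n+1) / ((n:ℝ)+1) * Real.exp (((n:ℝ)+1) * (z - c*t)))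
        (A ^ (n+1) * Real.exp (x - c*t)
          - A ^ (n+1) / ((n:ℝ)+1) * (Real.exp (((n:ℝ)+1) * (x - c*t)) * ((n:ℝ)+1))) x := by
      have h1 : HasDerivAt (fun z : ℝ => z - c*t) 1 x := (hasDerivAt_id x).sub_const _
      have h2 : HasDerivAt (fun z : ℝ => ((n:ℝ)+1) * (z - c*t)) (((n:ℝ)+1) * 1) x :=
        h1.const_mul _
      have := (h1.exp.const_mul (A ^ (n+1))).sub
        (h2.exp.const_mul (A ^ (n+1) / ((n:ℝ)+1)))
      exact this.congr_deriv (by ring)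
    have ht3 : HasDerivAt (fun z => ∫ y : ℝ, g (z - y) * fPeakon n c t y)
        (A ^ (n+1) * Real.exp (x - c*t)
          - A ^ (n+1) / ((n:ℝ)+1) * (Real.exp (((n:ℝ)+1) * (x - c*t)) * ((n:ℝ)+1))) x :=
      hd3.congr_of_eventuallyEq hev3
    refine ⟨ht1.differentiableAt, ht2.differentiableAt, ht3.differentiableAt, ?_⟩
    rw [ht1.deriv, ht2.deriv, ht3.deriv]
    have hval : peakon n c t x = A * Real.exp (x - c*t) := by
      unfold peakon
      rw [← hA, abs_of_neg (by linarith : x - c*t < 0)]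
      ring_nf
    rw [hval]
    have hpow : (A * Real.exp (x - c*t)) ^ n * (A * Real.exp (x - c*t))
        = c * A * Real.exp (((n:ℝ)+1) * (x - c*t)) := by
      rw [← pow_succ, mul_pow, hA1, ← Real.exp_nat_mul]
      push_cast
      ring_nf
    rw [hA1]
    field_simp
    rw [mul_comm (x - c*t) ((n:ℝ)+1)]
    linear_combination hpow
  · -- c*t < x
    have hev1 : (fun s => peakon n c s x) =ᶠ[𝓝 t] (fun s => A * Real.exp (c*s - x)) := by
      have hopen : IsOpen {s : ℝ | c * s < x} :=
        isOpen_lt (continuous_const.mul continuous_id) continuous_const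
      filter_upwards [hopen.mem_nhds (by simpa using by linarith : t ∈ {s : ℝ | c * s < x})]
        with s hs
      unfold peakon
      rw [← hA, abs_of_pos (by simpa using hs : (0:ℝ) < x - c*s)]
      ring_nf
    have hd1 : HasDerivAt (fun s : ℝ => A * Real.exp (c*s - x))
        (A * (Real.exp (c*t - x) * c)) t := by
      have h1 : HasDerivAt (fun s : ℝ => c*s - x) c t := by
        simpa using ((hasDerivAt_id t).const_mul c).sub_const x
      exact h1.exp.const_mul A
    have ht1 : HasDerivAt (fun s => peakon n c s x) (A * (Real.exp (c*t - x) * c)) t :=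
      hd1.congr_of_eventuallyEq hev1
    have hev2 : (fun y => peakon n c t y) =ᶠ[𝓝 x] (fun y => A * Real.exp (c*t - y)) := by
      filter_upwards [eventually_gt_nhds (by linarith : c*t < x)] with y hy
      unfold peakon
      rw [← hA, abs_of_pos (by linarith : (0:ℝ) < y - c*t)]
      ring_nf
    have hd2 : HasDerivAt (fun y : ℝ => A * Real.exp (c*t - y))
        (A * (Real.exp (c*t - x) * (-1))) x := by
      have h1 : HasDerivAt (fun y : ℝ => c*t - y) (-1) x := by
        simpa using (hasDerivAt_id x).const_sub (c*t)
      exact h1.exp.const_mul A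
    have ht2 : HasDerivAt (fun y => peakon n c t y) (A * (Real.exp (c*t - x) * (-1))) x :=
      hd2.congr_of_eventuallyEq hev2
    have hev3 : (fun z => ∫ y : ℝ, g (z - y) * fPeakon n c t y) =ᶠ[𝓝 x]
        (fun z => A ^ (n+1) * Real.exp (c*t - z)
          - A ^ (n+1) / ((n:ℝ)+1) * Real.exp (((n:ℝ)+1) * (c*t - z))) := by
      rw [hkey]
      filter_upwards [eventually_gt_nhds (by linarith : c*t < x)] with z hz
      rw [abs_of_pos (by linarith : (0:ℝ) < z - c*t)]
      ring_nf
    have hd3 : HasDerivAt (fun z : ℝ => A ^ (n+1) * Real.exp (c*t - z)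
          - A ^ (n+1) / ((n:ℝ)+1) * Real.exp (((n:ℝ)+1) * (c*t - z)))
        (A ^ (n+1) * (Real.exp (c*t - x) * (-1))
          - A ^ (n+1) / ((n:ℝ)+1) * (Real.exp (((n:ℝ)+1) * (c*t - x)) * (((n:ℝ)+1) * (-1)))) x := by
      have h1 : HasDerivAt (fun z : ℝ => c*t - z) (-1) x := by
        simpa using (hasDerivAt_id x).const_sub (c*t)
      have h2 : HasDerivAt (fun z : ℝ => ((n:ℝ)+1) * (c*t - z)) (((n:ℝ)+1) * (-1)) x :=
        h1.const_mul _
      exact (h1.exp.const_mul (A ^ (n+1))).sub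
        (h2.exp.const_mul (A ^ (n+1) / ((n:ℝ)+1)))
    have ht3 : HasDerivAt (fun z => ∫ y : ℝ, g (z - y) * fPeakon n c t y)
        (A ^ (n+1) * (Real.exp (c*t - x) * (-1))
          - A ^ (n+1) / ((n:ℝ)+1) * (Real.exp (((n:ℝ)+1) * (c*t - x)) * (((n:ℝ)+1) * (-1)))) x :=
      hd3.congr_of_eventuallyEq hev3
    refine ⟨ht1.differentiableAt, ht2.differentiableAt, ht3.differentiableAt, ?_⟩
    rw [ht1.deriv, ht2.deriv, ht3.deriv]
    have hval : peakon n c t x = A * Real.exp (c*t - x) := by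
      unfold peakon
      rw [← hA, abs_of_pos (by linarith : (0:ℝ) < x - c*t)]
      ring_nf
    rw [hval]
    have hpow : (A * Real.exp (c*t - x)) ^ n * (A * Real.exp (c*t - x))
        = c * A * Real.exp (((n:ℝ)+1) * (c*t - x)) := by
      rw [← pow_succ, mul_pow, hA1, ← Real.exp_nat_mul]
      push_cast
      ring_nf
    rw [hA1]
    field_simp
    rw [mul_comm (c*t - x) ((n:ℝ)+1)]
    linear_combination (-1 : ℝ) * hpow
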